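/- arXiv:0906.3733 — 3 statements merged into one kernel-verified Lean document; each statement's English description precedes it below -/
import Mathlib

section
/- Let ψ : M → N and φ : N → L be K-linear maps of K-vector spaces. If two of the three maps ψ, φ, φ∘ψ are Fredholm, then so is the third, and in that case ind(φ∘ψ) = ind(φ) + ind(ψ). -/
namespace Stmt0

noncomputable section

variable {K : Type*} [Field K]

/-- A `K`-linear map is Fredholm if its kernel and cokernel are finite dimensional. -/
def IsFredholm {V U : Type*} [AddCommGroup V] [Module K V] [AddCommGroup U] [Module K U]
    (f : V →ₗ[K] U) : Prop :=
  FiniteDimensional K (LinearMap.ker f) ∧ FiniteDimensional K (U ⧸ LinearMap.range f)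

/-- The index of a (Fredholm) linear map: `dim ker - dim coker`. -/
def fredInd {V U : Type*} [AddCommGroup V] [Module K V] [AddCommGroup U] [Module K U]
    (f : V →ₗ[K] U) : ℤ :=
  (Module.finrank K (LinearMap.ker f) : ℤ) - (Module.finrank K (U ⧸ LinearMap.range f) : ℤ)

/-- A linear map with finite-dimensional kernel and range has finite-dimensional domain. -/
theorem fd_of_ker_range {V U : Type*} [AddCommGroup V] [Module K V] [AddCommGroup U] [Module K U]
    (f : V →ₗ[K] U) (h1 : FiniteDimensional K (LinearMap.ker f))
    (h2 : FiniteDimensional K (LinearMap.range f)) : FiniteDimensional K V := by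
  have hq : FiniteDimensional K (V ⧸ LinearMap.ker f) :=
    Module.Finite.equiv (f.quotKerEquivRange).symm
  exact IsNoetherian.iff_fg.1 <| (isNoetherian_iff_submodule_quotient (LinearMap.ker f)).2
    ⟨IsNoetherian.iff_fg.2 h1, IsNoetherian.iff_fg.2 hq⟩

/-- A submodule finite extension: `S` and `V ⧸ S` finite-dimensional implies `V` f.d. -/
theorem fd_of_submodule_quotient {V : Type*} [AddCommGroup V] [Module K V] (S : Submodule K V)
    (h1 : FiniteDimensional K S) (h2 : FiniteDimensional K (V ⧸ S)) : FiniteDimensional K V :=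
  IsNoetherian.iff_fg.1 <| (isNoetherian_iff_submodule_quotient S).2
    ⟨IsNoetherian.iff_fg.2 h1, IsNoetherian.iff_fg.2 h2⟩

/-- If two of the three maps `ψ`, `φ`, `φ ∘ ψ` are Fredholm then so is the third, and in this
case `ind (φ ∘ ψ) = ind φ + ind ψ`. -/
theorem ind_comp {M N L : Type*} [AddCommGroup M] [Module K M] [AddCommGroup N] [Module K N]
    [AddCommGroup L] [Module K L] (ψ : M →ₗ[K] N) (φ : N →ₗ[K] L) :
    (IsFredholm ψ → IsFredholm φ → IsFredholm (φ ∘ₗ ψ)) ∧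
    (IsFredholm ψ → IsFredholm (φ ∘ₗ ψ) → IsFredholm φ) ∧
    (IsFredholm φ → IsFredholm (φ ∘ₗ ψ) → IsFredholm ψ) ∧
    (IsFredholm ψ → IsFredholm φ → fredInd (φ ∘ₗ ψ) = fredInd φ + fredInd ψ) := by
  classical
  set Kc := LinearMap.ker (φ ∘ₗ ψ) with hKc
  set Rc := LinearMap.range (φ ∘ₗ ψ) with hRc
  -- the restriction of ψ to ker (φ ∘ ψ)
  set ψ' : Kc →ₗ[K] N := ψ ∘ₗ Kc.subtype with hψ'
  have hle : LinearMap.ker ψ ≤ Kc := LinearMap.ker_le_ker_comp ψ φ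
  have e1 : (LinearMap.ker ψ' : Type _) ≃ₗ[K] LinearMap.ker ψ :=
    (LinearEquiv.ofEq _ _ (LinearMap.ker_comp _ _)).trans (Submodule.comapSubtypeEquivOfLe hle)
  set X := LinearMap.range ψ ⊓ LinearMap.ker φ with hX
  have hrange1 : LinearMap.range ψ' = X := by
    rw [hψ', LinearMap.range_comp, Submodule.range_subtype, hKc, LinearMap.ker_comp,
      Submodule.map_comap_eq]
  -- the map ker φ → coker ψ
  set f₂ : (LinearMap.ker φ : Type _) →ₗ[K] N ⧸ LinearMap.range ψ :=
    (LinearMap.range ψ).mkQ ∘ₗ (LinearMap.ker φ).subtype with hf₂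
  have e2 : (LinearMap.ker f₂ : Type _) ≃ₗ[K] X := by
    have h1 : LinearMap.ker f₂ = Submodule.comap (LinearMap.ker φ).subtype X := by
      rw [hf₂, LinearMap.ker_comp, Submodule.ker_mkQ]
      ext x
      simp only [Submodule.mem_comap, hX, Submodule.mem_inf]
      exact ⟨fun h => ⟨h, x.2⟩, fun h => h.1⟩
    exact (LinearEquiv.ofEq _ _ h1).trans (Submodule.comapSubtypeEquivOfLe inf_le_right)
  set Y := Submodule.map (LinearMap.range ψ).mkQ (LinearMap.ker φ) with hY
  have hrange2 : LinearMap.range f₂ = Y := by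
    rw [hf₂, LinearMap.range_comp, Submodule.range_subtype]
  -- the map coker ψ → coker (φ ∘ ψ) induced by φ
  have hcond : LinearMap.range ψ ≤ Submodule.comap φ Rc := by
    rintro _ ⟨m, rfl⟩; exact ⟨m, rfl⟩
  set f₃ : (N ⧸ LinearMap.range ψ) →ₗ[K] (L ⧸ Rc) :=
    Submodule.mapQ (LinearMap.range ψ) Rc φ hcond with hf₃
  have hker3 : LinearMap.ker f₃ = Y := by
    ext q
    obtain ⟨n, rfl⟩ := Submodule.mkQ_surjective _ q
    simp only [LinearMap.mem_ker, hf₃, Submodule.mkQ_apply, Submodule.mapQ_apply,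
      Submodule.Quotient.mk_eq_zero, hY, Submodule.mem_map]
    constructor
    · rintro h
      rw [hRc, LinearMap.range_comp] at h
      obtain ⟨_, ⟨m', rfl⟩, hmeq⟩ := h
      have hmeq' : φ (ψ m') = φ n := hmeq
      refine ⟨n - ψ m', ?_, ?_⟩
      · rw [map_sub, hmeq', sub_self]
      · rw [Submodule.Quotient.eq]
        exact ⟨-m', by simp⟩
    · rintro ⟨x, hx, hxe⟩
      have hx0 : φ x = 0 := hx
      rw [Submodule.Quotient.eq] at hxe
      obtain ⟨m, hm⟩ := hxe
      refine ⟨-m, ?_⟩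
      have : ψ m = x - n := hm
      simp only [LinearMap.comp_apply, map_neg, this, map_sub, hx0, zero_sub, neg_neg]
  have hrange3 : LinearMap.range f₃ = Submodule.map Rc.mkQ (LinearMap.range φ) := by
    rw [hf₃, ← LinearMap.range_comp_of_range_eq_top _ (Submodule.range_mkQ (LinearMap.range ψ)),
      Submodule.mapQ_mkQ, LinearMap.range_comp]
  set Z := Submodule.map Rc.mkQ (LinearMap.range φ) with hZ
  -- coker (φ ∘ ψ) ⧸ Z ≃ coker φ
  have hle2 : Rc ≤ LinearMap.range φ := LinearMap.range_comp_le_range ψ φ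
  have e4 : ((L ⧸ Rc) ⧸ Z : Type _) ≃ₗ[K] L ⧸ LinearMap.range φ :=
    Submodule.quotientQuotientEquivQuotient Rc (LinearMap.range φ) hle2
  -- Part 1
  have part1 : IsFredholm ψ → IsFredholm φ → IsFredholm (φ ∘ₗ ψ) := by
    rintro ⟨hψk, hψc⟩ ⟨hφk, hφc⟩
    have hXfd : FiniteDimensional K X := Submodule.finiteDimensional_of_le inf_le_right
    constructor
    · refine fd_of_ker_range ψ' (e1.symm.finiteDimensional) ?_
      rw [hrange1]; exact hXfd
    · have hZfd : FiniteDimensional K Z := by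
        rw [← hrange3]; exact Module.Finite.range f₃
      refine fd_of_submodule_quotient Z hZfd ?_
      exact Module.Finite.equiv e4.symm
  have part2 : IsFredholm ψ → IsFredholm (φ ∘ₗ ψ) → IsFredholm φ := by
    rintro ⟨hψk, hψc⟩ ⟨hck, hcc⟩
    constructor
    · refine fd_of_ker_range f₂ ?_ inferInstance
      have : FiniteDimensional K (LinearMap.range ψ') := Module.Finite.range ψ'
      rw [hrange1] at this
      exact e2.symm.finiteDimensional
    · exact Module.Finite.equiv e4
  have part3 : IsFredholm φ → IsFredholm (φ ∘ₗ ψ) → IsFredholm ψ := by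
    rintro ⟨hφk, hφc⟩ ⟨hck, hcc⟩
    constructor
    · exact e1.finiteDimensional
    · refine fd_of_ker_range f₃ ?_ ?_
      · rw [hker3, ← hrange2]; exact Module.Finite.range f₂
      · rw [hrange3]; exact inferInstance
  refine ⟨part1, part2, part3, ?_⟩
  -- the index formula
  rintro hψF hφF
  obtain ⟨hck, hcc⟩ := part1 hψF hφF
  obtain ⟨hψk, hψc⟩ := hψF
  obtain ⟨hφk, hφc⟩ := hφF
  have hXfd : FiniteDimensional K X := Submodule.finiteDimensional_of_le inf_le_right
  have hYfd : FiniteDimensional K Y := by rw [← hrange2]; exact Module.Finite.range f₂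
  have hZfd : FiniteDimensional K Z := by rw [← hrange3]; exact Module.Finite.range f₃
  have r1 : Module.finrank K X + Module.finrank K (LinearMap.ker ψ) = Module.finrank K Kc := by
    rw [← hrange1, ← e1.finrank_eq]
    exact LinearMap.finrank_range_add_finrank_ker ψ'
  have r2 : Module.finrank K Y + Module.finrank K X = Module.finrank K (LinearMap.ker φ) := by
    rw [← hrange2, ← e2.finrank_eq]
    exact LinearMap.finrank_range_add_finrank_ker f₂
  have r3 : Module.finrank K Z + Module.finrank K Y
      = Module.finrank K (N ⧸ LinearMap.range ψ) := by
    rw [← hrange3, ← hker3]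
    exact LinearMap.finrank_range_add_finrank_ker f₃
  have r4 : Module.finrank K (L ⧸ LinearMap.range φ) + Module.finrank K Z
      = Module.finrank K (L ⧸ Rc) := by
    rw [← e4.finrank_eq]
    exact Submodule.finrank_quotient_add_finrank Z
  show (Module.finrank K Kc : ℤ) - Module.finrank K (L ⧸ Rc)
      = ((Module.finrank K (LinearMap.ker φ) : ℤ)
        - Module.finrank K (L ⧸ LinearMap.range φ))
      + ((Module.finrank K (LinearMap.ker ψ) : ℤ)
        - Module.finrank K (N ⧸ LinearMap.range ψ))
  omega

end

end Stmt0
end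

section
/- For every subset J ⊆ {1,…,n} with |J| ≥ 2 and all distinct i, j ∈ J, one has θ_{ij}(J)·θ_{ji}(J) = 1 and θ_{ji}(J)·θ_{ij}(J) = 1 in 𝕊_n; in particular θ_{ij}(J) is a unit of 𝕊_n with inverse θ_{ji}(J). -/
set_option synthInstance.maxHeartbeats 1000000
set_option maxHeartbeats 1600000

open MvPolynomial

namespace SnAlg

noncomputable section

variable (K : Type*) [Field K] [CharZero K] (n : ℕ)

/-- The polynomial algebra `P_n = K[x_1,…,x_n]`. -/
abbrev Poly := MvPolynomial (Fin n) K

/-- The operator `x_i` : multiplication by the variable `x_i`. -/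
def xop (i : Fin n) : Module.End K (Poly K n) := LinearMap.mulLeft K (X i)

/-- The operator `y_i`, the one-sided inverse of `x_i`: it sends the monomial `x^α` to
`x^{α - e_i}` if `α_i > 0` and to `0` otherwise. -/
def yop (i : Fin n) : Module.End K (Poly K n) :=
  (MvPolynomial.basisMonomials (Fin n) K).constr K fun α =>
    if α i = 0 then 0
    else (MvPolynomial.basisMonomials (Fin n) K) (α - Finsupp.single i 1)

/-- The algebra `𝕊_n` of one-sided inverses of `P_n`: the subalgebra of `End_K(P_n)`
generated by `x_1,…,x_n,y_1,…,y_n`. -/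
def Sn : Subalgebra K (Module.End K (Poly K n)) :=
  Algebra.adjoin K (Set.range (xop K n) ∪ Set.range (yop K n))

/-- `x_i` as an element of `𝕊_n`. -/
def Xe (i : Fin n) : Sn K n :=
  ⟨xop K n i, Algebra.subset_adjoin (Set.mem_union_left _ ⟨i, rfl⟩)⟩

/-- `y_i` as an element of `𝕊_n`. -/
def Ye (i : Fin n) : Sn K n :=
  ⟨yop K n i, Algebra.subset_adjoin (Set.mem_union_right _ ⟨i, rfl⟩)⟩

/-- The two-sided ideal `𝔭_i` of `𝕊_n` generated by `1 - x_i y_i`. -/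
def pIdeal (i : Fin n) : TwoSidedIdeal (Sn K n) :=
  TwoSidedIdeal.span {1 - Xe K n i * Ye K n i}

/-- `e_J := ∏_{k ∈ J} (1 - x_k y_k)` (the factors pairwise commute; the product is taken in
increasing order of the indices). -/
def eSet (J : Finset (Fin n)) : Sn K n :=
  ((J.sort (· ≤ ·)).map fun k => 1 - Xe K n k * Ye K n k).prod

/-- `μ_J(a) := a e_J + 1 - e_J`. -/
def mu (J : Finset (Fin n)) (a : Sn K n) : Sn K n :=
  a * eSet K n J + 1 - eSet K n J

/-- `θ_{ij}(J) := μ_{J∖i}(y_i) · μ_{J∖j}(x_j)`. -/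
def theta (J : Finset (Fin n)) (i j : Fin n) : Sn K n :=
  mu K n (J.erase i) (Ye K n i) * mu K n (J.erase j) (Xe K n j)

/-- The factor `E_{kl}(i) = x_i^k y_i^l - x_i^{k+1} y_i^{l+1}`. -/
def Efac (i : Fin n) (k l : ℕ) : Sn K n :=
  Xe K n i ^ k * Ye K n i ^ l - Xe K n i ^ (k + 1) * Ye K n i ^ (l + 1)

/-- `E_{αβ} := ∏_{i=1}^n E_{α_i β_i}(i)`. -/
def Eab (α β : Fin n → ℕ) : Sn K n :=
  ((List.finRange n).map fun i => Efac K n i (α i) (β i)).prod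

/-- `F_n`, the `K`-linear span of all the `E_{αβ}`. -/
def Fn : Submodule K (Sn K n) :=
  Submodule.span K {f | ∃ α β : Fin n → ℕ, f = Eab K n α β}

/-- A `K`-linear map is Fredholm if its kernel and cokernel are finite dimensional. -/
def IsFredholm {V U : Type*} [AddCommGroup V] [Module K V] [AddCommGroup U] [Module K U]
    (f : V →ₗ[K] U) : Prop :=
  FiniteDimensional K (LinearMap.ker f) ∧ FiniteDimensional K (U ⧸ LinearMap.range f)

/-- The index of a (Fredholm) linear map: `dim ker - dim coker`. -/
def fredInd {V U : Type*} [AddCommGroup V] [Module K V] [AddCommGroup U] [Module K U]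
    (f : V →ₗ[K] U) : ℤ :=
  (Module.finrank K (LinearMap.ker f) : ℤ) - (Module.finrank K (U ⧸ LinearMap.range f) : ℤ)



section RingLemmas
variable {R : Type*} [Ring R]

lemma mu_y_mul_mu_x {x y e : R} (hyx : y * x = 1) (he : e * e = e)
    (hex : e * x = x * e) (hey : e * y = y * e) :
    (y * e + 1 - e) * (x * e + 1 - e) = 1 := by
  have hA : (1 - e) * (x * e) = 0 := by
    have h : e * (x * e) = x * e := by rw [← mul_assoc, hex, mul_assoc, he]
    rw [sub_mul, one_mul, h, sub_self]
  have hB : (y * e) * (1 - e) = 0 := by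
    rw [mul_sub, mul_one, mul_assoc, he, sub_self]
  have hC : (y * e) * (x * e) = e := by
    rw [mul_assoc, ← mul_assoc e, hex, mul_assoc, he, ← mul_assoc, hyx, one_mul]
  have hD : ((1 : R) - e) * (1 - e) = 1 - e := by
    rw [sub_mul, one_mul, mul_sub, mul_one, he]; abel
  calc (y * e + 1 - e) * (x * e + 1 - e)
      = (y * e) * (x * e) + (y * e) * (1 - e) + ((1 - e) * (x * e) + (1 - e) * (1 - e)) := by
        rw [add_sub_assoc, add_sub_assoc, add_mul, mul_add, mul_add]
    _ = 1 := by rw [hA, hB, hC, hD]; abel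

lemma mu_x_mul_mu_y {x y e : R} (he : e * e = e)
    (hex : e * x = x * e) (hey : e * y = y * e) :
    (x * e + 1 - e) * (y * e + 1 - e) = 1 - (1 - x * y) * e := by
  have hA : (1 - e) * (y * e) = 0 := by
    have h : e * (y * e) = y * e := by rw [← mul_assoc, hey, mul_assoc, he]
    rw [sub_mul, one_mul, h, sub_self]
  have hB : (x * e) * (1 - e) = 0 := by
    rw [mul_sub, mul_one, mul_assoc, he, sub_self]
  have hC : (x * e) * (y * e) = x * y * e := by
    rw [mul_assoc, ← mul_assoc e, hey, mul_assoc, he, ← mul_assoc]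
  have hD : ((1 : R) - e) * (1 - e) = 1 - e := by
    rw [sub_mul, one_mul, mul_sub, mul_one, he]; abel
  calc (x * e + 1 - e) * (y * e + 1 - e)
      = (x * e) * (y * e) + (x * e) * (1 - e) + ((1 - e) * (y * e) + (1 - e) * (1 - e)) := by
        rw [add_sub_assoc, add_sub_assoc, add_mul, mul_add, mul_add]
    _ = 1 - (1 - x * y) * e := by rw [hA, hB, hC, hD, sub_mul, one_mul]; abel

lemma mu_y_absorb {x y e : R} (hyx : y * x = 1) (he : e * e = e)
    (hex : e * x = x * e) (hey : e * y = y * e) :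
    (y * e + 1 - e) * (1 - (1 - x * y) * e) = y * e + 1 - e := by
  have hexy : e * (x * y) = (x * y) * e := by
    rw [← mul_assoc, hex, mul_assoc, hey, ← mul_assoc]
  have hcomm : e * (1 - x * y) = (1 - x * y) * e := by
    rw [mul_sub, mul_one, sub_mul, one_mul, hexy]
  have hE1 : e * ((1 - x * y) * e) = (1 - x * y) * e := by
    rw [← mul_assoc, hcomm, mul_assoc, he]
  have h1 : y * (1 - x * y) = 0 := by
    rw [mul_sub, mul_one, ← mul_assoc, hyx, one_mul, sub_self]
  have hE2 : (y * e) * ((1 - x * y) * e) = 0 := by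
    rw [mul_assoc, ← mul_assoc e, hcomm, mul_assoc, he, ← mul_assoc, h1, zero_mul]
  have hz : (y * e + 1 - e) * ((1 - x * y) * e) = 0 := by
    rw [add_sub_assoc, add_mul, hE2, sub_mul, one_mul, hE1, sub_self, add_zero]
  rw [mul_sub, mul_one, hz, sub_zero]

lemma theta_ring {x1 y1 e1 x2 y2 e2 : R}
    (h1 : y1 * x1 = 1)
    (he1 : e1 * e1 = e1) (he2 : e2 * e2 = e2)
    (c1x : e1 * x1 = x1 * e1) (c1y : e1 * y1 = y1 * e1)
    (c2x : e2 * x2 = x2 * e2) (c2y : e2 * y2 = y2 * e2)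
    (hE : (1 - x2 * y2) * e2 = (1 - x1 * y1) * e1) :
    (y1 * e1 + 1 - e1) * (x2 * e2 + 1 - e2) * ((y2 * e2 + 1 - e2) * (x1 * e1 + 1 - e1)) = 1 := by
  have hmid : (x2 * e2 + 1 - e2) * (y2 * e2 + 1 - e2) = 1 - (1 - x1 * y1) * e1 := by
    rw [mu_x_mul_mu_y he2 c2x c2y, hE]
  calc (y1 * e1 + 1 - e1) * (x2 * e2 + 1 - e2) * ((y2 * e2 + 1 - e2) * (x1 * e1 + 1 - e1))
      = (y1 * e1 + 1 - e1) * ((x2 * e2 + 1 - e2) * (y2 * e2 + 1 - e2)) * (x1 * e1 + 1 - e1) := by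
        rw [mul_assoc, mul_assoc, mul_assoc]
    _ = (y1 * e1 + 1 - e1) * (1 - (1 - x1 * y1) * e1) * (x1 * e1 + 1 - e1) := by rw [hmid]
    _ = (y1 * e1 + 1 - e1) * (x1 * e1 + 1 - e1) := by rw [mu_y_absorb h1 he1 c1x c1y]
    _ = 1 := mu_y_mul_mu_x h1 he1 c1x c1y

lemma one_sub_idem {a : R} (h : a * a = a) :
    (1 - a) * (1 - a) = 1 - a := by
  rw [sub_mul, one_mul, mul_sub, mul_one, h]; abel

lemma xyxy {x y : R} (h : y * x = 1) :
    x * y * (x * y) = x * y := by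
  rw [mul_assoc, ← mul_assoc y, h, one_mul]

lemma list_prod_idem (l : List R) (hc : l.Pairwise Commute)
    (hi : ∀ a ∈ l, a * a = a) : l.prod * l.prod = l.prod := by
  induction l with
  | nil => simp
  | cons a l ih =>
    rw [List.pairwise_cons] at hc
    have hcom : a * l.prod = l.prod * a := Commute.list_prod_right l a hc.1
    have hp : l.prod * l.prod = l.prod := ih hc.2 fun b hb => hi b (List.mem_cons_of_mem a hb)
    have ha : a * a = a := hi a List.mem_cons_self
    rw [List.prod_cons, mul_assoc, ← mul_assoc l.prod a l.prod, ← hcom,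
      mul_assoc a l.prod l.prod, hp, ← mul_assoc, ha]

end RingLemmas

set_option linter.unusedSectionVars false in
lemma yop_monomial (i : Fin n) (α : Fin n →₀ ℕ) :
    yop K n i (monomial α 1) =
      if α i = 0 then 0 else monomial (α - Finsupp.single i 1) (1 : K) := by
  have h := Module.Basis.constr_basis (basisMonomials (Fin n) K) K
    (fun α => if α i = 0 then 0
      else (basisMonomials (Fin n) K) (α - Finsupp.single i 1)) α
  simp only [coe_basisMonomials] at h
  exact h

set_option linter.unusedSectionVars false in
lemma xop_monomial (i : Fin n) (α : Fin n →₀ ℕ) :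
    xop K n i (monomial α 1) = monomial (α + Finsupp.single i 1) (1 : K) := by
  simp only [xop, LinearMap.mulLeft_apply]
  rw [X, monomial_mul, one_mul, add_comm]

lemma sub_single_eq {m : ℕ} (i j : Fin m) (α : Fin m →₀ ℕ) :
    α - Finsupp.single j 1 - Finsupp.single i 1 = α - Finsupp.single i 1 - Finsupp.single j 1 := by
  ext k; simp only [Finsupp.tsub_apply, Finsupp.single_apply]
  split_ifs <;> omega

lemma add_sub_single_eq {m : ℕ} {i j : Fin m} (hij : i ≠ j) (α : Fin m →₀ ℕ) :
    α + Finsupp.single i 1 - Finsupp.single j 1 = α - Finsupp.single j 1 + Finsupp.single i 1 := by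
  ext k; simp only [Finsupp.tsub_apply, Finsupp.add_apply, Finsupp.single_apply]
  split_ifs with h h' <;> omega

set_option linter.unusedSectionVars false in
lemma yop_mul_xop (i : Fin n) : yop K n i * xop K n i = 1 := by
  apply (basisMonomials (Fin n) K).ext
  intro α
  simp [Module.End.mul_apply, coe_basisMonomials, xop_monomial, yop_monomial,
    add_tsub_cancel_right]

set_option linter.unusedSectionVars false in
lemma xop_comm_xop (i j : Fin n) : xop K n i * xop K n j = xop K n j * xop K n i := by
  apply (basisMonomials (Fin n) K).ext
  intro α
  simp [Module.End.mul_apply, coe_basisMonomials, xop_monomial, add_right_comm]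

set_option linter.unusedSectionVars false in
lemma yop_comm_yop {i j : Fin n} (hij : i ≠ j) :
    yop K n i * yop K n j = yop K n j * yop K n i := by
  apply (basisMonomials (Fin n) K).ext
  intro α
  by_cases h1 : α j = 0 <;> by_cases h2 : α i = 0 <;>
    simp [Module.End.mul_apply, coe_basisMonomials, yop_monomial, apply_ite,
      Finsupp.tsub_apply, Finsupp.single_eq_of_ne' hij, Finsupp.single_eq_of_ne' (Ne.symm hij),
      h1, h2, sub_single_eq]

set_option linter.unusedSectionVars false in
lemma xop_comm_yop {i j : Fin n} (hij : i ≠ j) :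
    xop K n i * yop K n j = yop K n j * xop K n i := by
  apply (basisMonomials (Fin n) K).ext
  intro α
  by_cases h1 : α j = 0 <;>
    simp [Module.End.mul_apply, coe_basisMonomials, yop_monomial, xop_monomial, apply_ite,
      Finsupp.add_apply, Finsupp.tsub_apply, Finsupp.single_eq_of_ne' hij,
      Finsupp.single_eq_of_ne' (Ne.symm hij), h1, add_sub_single_eq hij]

lemma Ye_mul_Xe (i : Fin n) : Ye K n i * Xe K n i = 1 :=
  Subtype.ext (by simpa [Xe, Ye] using yop_mul_xop K n i)

lemma commute_Xe_Xe (k l : Fin n) : Commute (Xe K n k) (Xe K n l) :=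
  Subtype.ext (by simpa [Xe] using xop_comm_xop K n k l)

lemma commute_Ye_Ye {k l : Fin n} (h : k ≠ l) : Commute (Ye K n k) (Ye K n l) :=
  Subtype.ext (by simpa [Ye] using yop_comm_yop K n h)

lemma commute_Xe_Ye {k l : Fin n} (h : k ≠ l) : Commute (Xe K n k) (Ye K n l) :=
  Subtype.ext (by simpa [Xe, Ye] using xop_comm_yop K n h)

lemma commute_gen_f {c : Sn K n} {k : Fin n}
    (hx : Commute c (Xe K n k)) (hy : Commute c (Ye K n k)) :
    Commute c (1 - Xe K n k * Ye K n k) :=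
  Commute.sub_right (R := Sn K n) (Commute.one_right c) (hx.mul_right hy)

lemma commute_f_f (k l : Fin n) :
    Commute (1 - Xe K n k * Ye K n k) (1 - Xe K n l * Ye K n l) := by
  rcases eq_or_ne k l with rfl | h
  · exact Commute.refl _
  · have hx : Commute (Xe K n k) (1 - Xe K n l * Ye K n l) :=
      commute_gen_f K n (commute_Xe_Xe K n k l) (commute_Xe_Ye K n h)
    have hy : Commute (Ye K n k) (1 - Xe K n l * Ye K n l) :=
      commute_gen_f K n ((commute_Xe_Ye K n h.symm).symm) (commute_Ye_Ye K n h)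
    have h1 : Commute (1 : Sn K n) (1 - Xe K n l * Ye K n l) := Commute.one_left _
    exact Commute.sub_left (R := Sn K n) h1 (hx.mul_left hy)

lemma eSet_pairwise (J : Finset (Fin n)) :
    ((J.sort (· ≤ ·)).map fun k => 1 - Xe K n k * Ye K n k).Pairwise Commute :=
  List.Pairwise.map _ (fun {a b} _ => commute_f_f K n a b) (Finset.pairwise_sort _ _)

lemma eSet_idem (J : Finset (Fin n)) : eSet K n J * eSet K n J = eSet K n J := by
  unfold eSet
  apply list_prod_idem (R := Sn K n) _ (eSet_pairwise K n J)
  intro a ha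
  obtain ⟨k, hk, rfl⟩ := List.mem_map.1 ha
  exact one_sub_idem (R := Sn K n) (xyxy (R := Sn K n) (Ye_mul_Xe K n k))

lemma commute_eSet {c : Sn K n} {J : Finset (Fin n)}
    (h : ∀ k ∈ J, Commute c (1 - Xe K n k * Ye K n k)) : Commute c (eSet K n J) := by
  apply Commute.list_prod_right
  intro b hb
  obtain ⟨k, hk, rfl⟩ := List.mem_map.1 hb
  exact h k ((Finset.mem_sort _).1 hk)

lemma eSet_erase_eq {J : Finset (Fin n)} {i : Fin n} (hi : i ∈ J) :
    eSet K n J = (1 - Xe K n i * Ye K n i) * eSet K n (J.erase i) := by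
  have hperm : List.Perm (J.sort (· ≤ ·)) (i :: (J.erase i).sort (· ≤ ·)) := by
    rw [← Multiset.coe_eq_coe]
    push_cast [Finset.sort_eq]
    rw [← Multiset.cons_coe, Finset.sort_eq, Finset.erase_val,
      Multiset.cons_erase (Finset.mem_def.1 hi)]
  have := List.Perm.prod_eq' (hperm.map fun k => 1 - Xe K n k * Ye K n k) (eSet_pairwise K n J)
  rw [eSet, this, List.map_cons, List.prod_cons, eSet]

lemma commute_eSet_Xe {J : Finset (Fin n)} {i : Fin n} (hi : i ∉ J) :
    Commute (Xe K n i) (eSet K n J) := by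
  apply commute_eSet
  intro k hk
  have hik : i ≠ k := fun h => hi (h ▸ hk)
  exact commute_gen_f K n (commute_Xe_Xe K n i k) (commute_Xe_Ye K n hik)

lemma commute_eSet_Ye {J : Finset (Fin n)} {i : Fin n} (hi : i ∉ J) :
    Commute (Ye K n i) (eSet K n J) := by
  apply commute_eSet
  intro k hk
  have hik : i ≠ k := fun h => hi (h ▸ hk)
  exact commute_gen_f K n ((commute_Xe_Ye K n hik.symm).symm) (commute_Ye_Ye K n hik)

lemma theta_key {J : Finset (Fin n)} {i j : Fin n} (hi : i ∈ J) (hj : j ∈ J) (hij : i ≠ j) :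
    theta K n J i j * theta K n J j i = 1 := by
  have he1 := eSet_idem K n (J.erase i)
  have he2 := eSet_idem K n (J.erase j)
  have c1x := (commute_eSet_Xe K n (Finset.notMem_erase i J)).symm.eq
  have c1y := (commute_eSet_Ye K n (Finset.notMem_erase i J)).symm.eq
  have c2x := (commute_eSet_Xe K n (Finset.notMem_erase j J)).symm.eq
  have c2y := (commute_eSet_Ye K n (Finset.notMem_erase j J)).symm.eq
  have hE : (1 - Xe K n j * Ye K n j) * eSet K n (J.erase j)
      = (1 - Xe K n i * Ye K n i) * eSet K n (J.erase i) :=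
    (eSet_erase_eq K n hj).symm.trans (eSet_erase_eq K n hi)
  exact theta_ring (R := Sn K n) (Ye_mul_Xe K n i) he1 he2 c1x c1y c2x c2y hE

/-- For `|J| ≥ 2` and distinct `i, j ∈ J`, `θ_{ij}(J)·θ_{ji}(J) = 1 = θ_{ji}(J)·θ_{ij}(J)`;
in particular `θ_{ij}(J)` is a unit of `𝕊_n` with inverse `θ_{ji}(J)`. -/
theorem theta_mul_theta_eq_one (hn : 2 ≤ n) (J : Finset (Fin n)) (hJ : 2 ≤ J.card)
    (i j : Fin n) (hi : i ∈ J) (hj : j ∈ J) (hij : i ≠ j) :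
    theta K n J i j * theta K n J j i = 1 ∧
    theta K n J j i * theta K n J i j = 1 ∧
    IsUnit (theta K n J i j) :=
  ⟨theta_key K n hi hj hij, theta_key K n hj hi hij.symm,
    ⟨⟨theta K n J i j, theta K n J j i, theta_key K n hi hj hij,
      theta_key K n hj hi hij.symm⟩, rfl⟩⟩

end

end SnAlg
end

section
/- Let A and B be groups with A acting on B by automorphisms (a,b) ↦ ᵃb, and form the semidirect product G = A ⋉ B. Let [A,B] denote the subgroup of B generated by all elements ᵃb·b^{-1} with a ∈ A, b ∈ B. Then the commutator subgroup of G is [G,G] = [A,A] ⋉ ([A,B]·[B,B]); consequently B ∩ [G,G] = [A,B]·[B,B] and G/[G,G] ≅ (A/[A,A]) × (B/([A,B]·[B,B])). -/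
namespace Stmt17

open scoped commutatorElement

/-- Let `A` act on `B` by automorphisms via `φ` and let `G = A ⋉ B` (realized in Mathlib as
`B ⋊[φ] A`). Let `[A,B]` be the subgroup of `B` generated by the elements `ᵃb·b⁻¹` and let
`C = [A,B]·[B,B]` (a normal subgroup of `G`). Then `[G,G] = [A,A] ⋉ C`; consequently
`B ∩ [G,G] = C` and `G/[G,G] ≅ (A/[A,A]) × (B/C)`. -/
theorem commutator_semidirect {A B : Type*} [Group A] [Group B] (φ : A →* MulAut B)
    (C : Subgroup B)
    (hC : C = Subgroup.closure {x : B | ∃ (a : A) (b : B), x = φ a b * b⁻¹} ⊔ commutator B)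
    [hCB : C.Normal] :
    commutator (B ⋊[φ] A) =
        Subgroup.map SemidirectProduct.inl C ⊔
          Subgroup.map SemidirectProduct.inr (commutator A) ∧
    (∀ b : B, SemidirectProduct.inl b ∈ commutator (B ⋊[φ] A) ↔ b ∈ C) ∧
    Nonempty (((B ⋊[φ] A) ⧸ commutator (B ⋊[φ] A)) ≃* (A ⧸ commutator A) × (B ⧸ C)) := by
  classical
  -- basic membership facts
  have hgen : ∀ (a : A) (b : B), φ a b * b⁻¹ ∈ C := by
    intro a b
    rw [hC]
    exact Subgroup.mem_sup_left (Subgroup.subset_closure ⟨a, b, rfl⟩)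
  have hcommB : commutator B ≤ C := by rw [hC]; exact le_sup_right
  -- the quotient map B → B⧸C kills the action of A
  have hmk : ∀ (a : A) (b : B), (QuotientGroup.mk (φ a b) : B ⧸ C) = QuotientGroup.mk b := by
    intro a b
    rw [QuotientGroup.eq]
    have h2 : (φ a b * b⁻¹)⁻¹ ∈ C := C.inv_mem (hgen a b)
    have h3 := hCB.conj_mem _ h2 (φ a b)⁻¹
    have : (φ a b)⁻¹ * (φ a b * b⁻¹)⁻¹ * ((φ a b)⁻¹)⁻¹ = (φ a b)⁻¹ * b := by group
    rwa [this] at h3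
  -- commutativity of the two quotients
  have hmulB : ∀ x y : B ⧸ C, x * y = y * x := by
    intro x y
    induction x using QuotientGroup.induction_on with
    | H a =>
    induction y using QuotientGroup.induction_on with
    | H b =>
    rw [← QuotientGroup.mk_mul, ← QuotientGroup.mk_mul, QuotientGroup.eq]
    have : (a * b)⁻¹ * (b * a) = ⁅b⁻¹, a⁻¹⁆ := by group
    rw [this]
    exact hcommB (by
      rw [commutator_def]
      exact Subgroup.commutator_mem_commutator (Subgroup.mem_top _) (Subgroup.mem_top _))
  have hmulA : ∀ x y : A ⧸ commutator A, x * y = y * x := by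
    intro x y
    induction x using QuotientGroup.induction_on with
    | H a =>
    induction y using QuotientGroup.induction_on with
    | H b =>
    rw [← QuotientGroup.mk_mul, ← QuotientGroup.mk_mul, QuotientGroup.eq]
    have : (a * b)⁻¹ * (b * a) = ⁅b⁻¹, a⁻¹⁆ := by group
    rw [this, commutator_def]
    exact Subgroup.commutator_mem_commutator (Subgroup.mem_top _) (Subgroup.mem_top _)
  -- the homomorphism G → (A⧸[A,A]) × (B⧸C)
  let f : B ⋊[φ] A →* (A ⧸ commutator A) × (B ⧸ C) :=
    { toFun := fun g => (QuotientGroup.mk g.right, QuotientGroup.mk g.left)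
      map_one' := rfl
      map_mul' := by
        intro x y
        refine Prod.ext rfl ?_
        show (QuotientGroup.mk (x.left * φ x.right y.left) : B ⧸ C)
            = QuotientGroup.mk x.left * QuotientGroup.mk y.left
        rw [QuotientGroup.mk_mul, hmk] }
  have hf : ∀ g : B ⋊[φ] A,
      f g = (QuotientGroup.mk g.right, QuotientGroup.mk g.left) := fun _ => rfl
  have hone : ∀ g : B ⋊[φ] A,
      f g = 1 ↔ (g.right ∈ commutator A ∧ g.left ∈ C) := by
    intro g
    rw [hf, Prod.ext_iff]
    constructor
    · rintro ⟨h1, h2⟩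
      exact ⟨(QuotientGroup.eq_one_iff _).mp h1, (QuotientGroup.eq_one_iff _).mp h2⟩
    · rintro ⟨h1, h2⟩
      exact ⟨(QuotientGroup.eq_one_iff _).mpr h1, (QuotientGroup.eq_one_iff _).mpr h2⟩
  -- ker f equals the claimed subgroup
  have hker : f.ker =
      Subgroup.map SemidirectProduct.inl C ⊔
        Subgroup.map SemidirectProduct.inr (commutator A) := by
    apply le_antisymm
    · intro g hg
      rw [MonoidHom.mem_ker, hone] at hg
      have : g = SemidirectProduct.inl g.left * SemidirectProduct.inr g.right := by
        ext <;> simp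
      rw [this]
      exact mul_mem (Subgroup.mem_sup_left ⟨g.left, hg.2, rfl⟩)
        (Subgroup.mem_sup_right ⟨g.right, hg.1, rfl⟩)
    · refine sup_le ?_ ?_
      · rintro g ⟨b, hb, rfl⟩
        rw [MonoidHom.mem_ker, hone]
        constructor
        · simpa using (commutator A).one_mem
        · simpa using hb
      · rintro g ⟨a, ha, rfl⟩
        rw [MonoidHom.mem_ker, hone]
        constructor
        · simpa using ha
        · simpa using C.one_mem
  -- the claimed subgroup is contained in the commutator subgroup
  have hle1 : Subgroup.map SemidirectProduct.inl C ⊔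
      Subgroup.map SemidirectProduct.inr (commutator A) ≤ commutator (B ⋊[φ] A) := by
    refine sup_le ?_ ?_
    · rw [Subgroup.map_le_iff_le_comap, hC]
      refine sup_le ?_ ?_
      · rw [Subgroup.closure_le]
        rintro x ⟨a, b, rfl⟩
        have key : (SemidirectProduct.inl (φ a b * b⁻¹) : B ⋊[φ] A)
            = ⁅(SemidirectProduct.inr a : B ⋊[φ] A), SemidirectProduct.inl b⁆ := by
          rw [commutatorElement_def, ← map_inv, ← map_inv, map_mul,
            ← SemidirectProduct.inl_aut]
        show SemidirectProduct.inl (φ a b * b⁻¹) ∈ commutator (B ⋊[φ] A)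
        rw [key, commutator_def]
        exact Subgroup.commutator_mem_commutator (Subgroup.mem_top _) (Subgroup.mem_top _)
      · rw [commutator_def, Subgroup.commutator_le]
        intro b₁ _ b₂ _
        show SemidirectProduct.inl ⁅b₁, b₂⁆ ∈ commutator (B ⋊[φ] A)
        rw [map_commutatorElement, commutator_def]
        exact Subgroup.commutator_mem_commutator (Subgroup.mem_top _) (Subgroup.mem_top _)
    · rw [Subgroup.map_le_iff_le_comap, commutator_def, Subgroup.commutator_le]
      intro a₁ _ a₂ _
      show SemidirectProduct.inr ⁅a₁, a₂⁆ ∈ commutator (B ⋊[φ] A)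
      rw [map_commutatorElement, commutator_def]
      exact Subgroup.commutator_mem_commutator (Subgroup.mem_top _) (Subgroup.mem_top _)
  -- the commutator subgroup is contained in ker f
  have hle2 : commutator (B ⋊[φ] A) ≤ f.ker := by
    rw [commutator_def, Subgroup.commutator_le]
    intro g₁ _ g₂ _
    rw [MonoidHom.mem_ker, map_commutatorElement]
    refine commutatorElement_eq_one_iff_mul_comm.mpr ?_
    exact Prod.ext (hmulA _ _) (hmulB _ _)
  have hmain : commutator (B ⋊[φ] A) =
      Subgroup.map SemidirectProduct.inl C ⊔
        Subgroup.map SemidirectProduct.inr (commutator A) :=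
    le_antisymm (hker ▸ hle2) hle1
  refine ⟨hmain, ?_, ?_⟩
  · intro b
    constructor
    · intro hb
      have := hle2 hb
      rw [MonoidHom.mem_ker, hone] at this
      simpa using this.2
    · intro hb
      exact hle1 (Subgroup.mem_sup_left ⟨b, hb, rfl⟩)
  · have hsurj : Function.Surjective f := by
      rintro ⟨x, y⟩
      obtain ⟨a, rfl⟩ := QuotientGroup.mk_surjective x
      obtain ⟨b, rfl⟩ := QuotientGroup.mk_surjective y
      exact ⟨⟨b, a⟩, rfl⟩
    exact ⟨(QuotientGroup.quotientMulEquivOfEq (hmain.trans hker.symm)).trans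
      (QuotientGroup.quotientKerEquivOfSurjective f hsurj)⟩

end Stmt17
end
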